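/- arXiv:1112.4398 — 3 statements merged into one kernel-verified Lean document; each statement's English description precedes it below -/
import Mathlib

section
/- (Bochner-type formula) Let n ≥ 1, let F : ℝⁿ → [0,∞) be a strongly convex Minkowski norm of class C³ on ℝⁿ∖{0}, and set a_{ij}(ξ) = ∂²(½F²)/∂ξ_i∂ξ_j (ξ) and a_{ijk}(ξ) = ∂³(½F²)/∂ξ_i∂ξ_j∂ξ_k (ξ). Let u be a C³ function on an open subset of ℝⁿ and let x be a point with ∇u(x) ≠ 0. Then at x, with all instances of a_{ij}, a_{ijk} and ∂(½F²)/∂ξ_k evaluated at ∇u(x), and writing Qu = Σ_{i,j} a_{ij}(∇u) u_{ij}: Σ_{i,j} a_{ij} ∂²/∂x_i∂x_j (½F²(∇u)) = Σ_{i,j,k,l} a_{ij} a_{kl} u_{ik} u_{jl} + Σ_k ∂(Qu)/∂x_k · ∂(½F²)/∂ξ_k (∇u) − Σ_{i,j,l} a_{ijl} ∂/∂x_l (½F²(∇u)) u_{ij}. -/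
open Real
open scoped RealInnerProductSpace

noncomputable section

/-- The `i`-th partial derivative of `f : ℝⁿ → ℝ` at `x`. -/
def pd {n : ℕ} (f : EuclideanSpace ℝ (Fin n) → ℝ) (i : Fin n)
    (x : EuclideanSpace ℝ (Fin n)) : ℝ :=
  fderiv ℝ f x (EuclideanSpace.single i 1)

/-- `a_{ij}(ξ) = ∂²(½F²)/∂ξ_i∂ξ_j (ξ)`. -/
def aCoeff {n : ℕ} (F : EuclideanSpace ℝ (Fin n) → ℝ) (i j : Fin n)
    (ξ : EuclideanSpace ℝ (Fin n)) : ℝ :=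
  pd (pd (fun η => F η ^ 2 / 2) i) j ξ

/-- `a_{ijk}(ξ) = ∂³(½F²)/∂ξ_i∂ξ_j∂ξ_k (ξ)`. -/
def aCoeff3 {n : ℕ} (F : EuclideanSpace ℝ (Fin n) → ℝ) (i j k : Fin n)
    (ξ : EuclideanSpace ℝ (Fin n)) : ℝ :=
  pd (pd (pd (fun η => F η ^ 2 / 2) i) j) k ξ

/-- A Minkowski norm on ℝⁿ: nonnegative, convex, even, positively 1-homogeneous,
and positive away from the origin. -/
structure IsMinkowskiNorm {n : ℕ} (F : EuclideanSpace ℝ (Fin n) → ℝ) : Prop where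
  nonneg : ∀ ξ, 0 ≤ F ξ
  convexOn : ConvexOn ℝ Set.univ F
  even : ∀ ξ, F (-ξ) = F ξ
  homog : ∀ (t : ℝ) (ξ : EuclideanSpace ℝ (Fin n)), F (t • ξ) = |t| * F ξ
  pos : ∀ ξ, ξ ≠ 0 → 0 < F ξ

/-- A strongly convex Minkowski norm of class C³: additionally `F` is C³ away from
the origin and the Hessian of `F²` is positive definite away from the origin. -/
structure IsStronglyConvexMinkowskiNormC3 {n : ℕ}
    (F : EuclideanSpace ℝ (Fin n) → ℝ) extends IsMinkowskiNorm F : Prop where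
  contDiff3 : ContDiffOn ℝ 3 F {(0 : EuclideanSpace ℝ (Fin n))}ᶜ
  posDef : ∀ ξ : EuclideanSpace ℝ (Fin n), ξ ≠ 0 →
    ∀ V : EuclideanSpace ℝ (Fin n), V ≠ 0 →
      0 < ∑ i, ∑ j, aCoeff F i j ξ * V i * V j

variable {n : ℕ}

section helpers
abbrev E (n : ℕ) := EuclideanSpace ℝ (Fin n)
def e (i : Fin n) : E n := EuclideanSpace.single i 1
lemma clm_decomp (ℓ : E n →L[ℝ] ℝ) (V : E n) : ℓ V = ∑ k, V k * ℓ (e k) := by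
  have hV : V = ∑ k, V k • e k := by
    ext j
    rw [WithLp.ofLp_sum, Finset.sum_apply]
    simp [e, EuclideanSpace.single_apply]
  conv_lhs => rw [hV]
  rw [map_sum]
  simp [smul_eq_mul]

lemma grad_coord (u : E n → ℝ) (y : E n) (k : Fin n) : gradient u y k = pd u k y := by
  have h1 : gradient u y k = ⟪gradient u y, e k⟫ := by
    simp [e, real_inner_comm, EuclideanSpace.inner_single_left, EuclideanSpace.inner_single_right, -inner_gradient_left]
  rw [h1, gradient, InnerProductSpace.toDual_symm_apply]
  rfl

lemma pd_congr {f g : E n → ℝ} {x : E n} (h : f =ᶠ[nhds x] g) (i : Fin n) :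
    pd f i x = pd g i x := by
  unfold pd; rw [h.fderiv_eq]

lemma contDiffOn_pd {m N : WithTop ℕ∞} {f : E n → ℝ} {s : Set (E n)}
    (hf : ContDiffOn ℝ N f s) (hs : IsOpen s) (h : m + 1 ≤ N) (i : Fin n) :
    ContDiffOn ℝ m (pd f i) s := by
  have h1 := hf.fderiv_of_isOpen hs h
  exact (ContinuousLinearMap.apply ℝ ℝ (EuclideanSpace.single i 1)).contDiff.comp_contDiffOn h1

lemma pd_sum {ι : Type*} (s : Finset ι) {f : ι → E n → ℝ} {x : E n}
    (h : ∀ i ∈ s, DifferentiableAt ℝ (f i) x) (j : Fin n) :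
    pd (fun y => ∑ i ∈ s, f i y) j x = ∑ i ∈ s, pd (f i) j x := by
  unfold pd
  rw [fderiv_fun_sum h]
  simp

lemma pd_mul {f g : E n → ℝ} {x : E n} (hf : DifferentiableAt ℝ f x)
    (hg : DifferentiableAt ℝ g x) (j : Fin n) :
    pd (fun y => f y * g y) j x = pd f j x * g x + f x * pd g j x := by
  unfold pd
  rw [fderiv_fun_mul hf hg]
  simp only [ContinuousLinearMap.add_apply, ContinuousLinearMap.smul_apply, smul_eq_mul]
  ring

lemma pd_chain {φ : E n → ℝ} {g : E n → E n} {x : E n}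
    (hφ : DifferentiableAt ℝ φ (g x)) (hg : DifferentiableAt ℝ g x) (i : Fin n) :
    pd (fun y => φ (g y)) i x = ∑ k, fderiv ℝ g x (e i) k * pd φ k (g x) := by
  unfold pd
  rw [show (fun y => φ (g y)) = φ ∘ g from rfl, fderiv_comp x hφ hg]
  rw [ContinuousLinearMap.comp_apply]
  exact clm_decomp (fderiv ℝ φ (g x)) (fderiv ℝ g x (EuclideanSpace.single i 1))

lemma schwarz {f : E n → ℝ} {x : E n} (hf : ContDiffAt ℝ 2 f x) (i j : Fin n) :
    pd (pd f i) j x = pd (pd f j) i x := by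
  have hd : DifferentiableAt ℝ (fderiv ℝ f) x :=
    (hf.fderiv_right (m := 1) (by norm_num)).differentiableAt (by norm_num)
  have hsym := hf.isSymmSndFDerivAt (by simp [minSmoothness_of_isRCLikeNormedField])
  have key : ∀ a b : Fin n, pd (pd f a) b x =
      fderiv ℝ (fderiv ℝ f) x (e b) (e a) := by
    intro a b
    show fderiv ℝ (fun y => fderiv ℝ f y (e a)) x (e b) = _
    rw [fderiv_clm_apply hd (differentiableAt_const _)]
    simp
  rw [key, key, hsym]

lemma grad_contDiffOn {u : E n → ℝ} {U : Set (E n)} (hu : ContDiffOn ℝ 3 u U)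
    (hU : IsOpen U) : ContDiffOn ℝ 2 (gradient u) U := by
  have h := hu.fderiv_of_isOpen hU (by norm_num : (2:WithTop ℕ∞) + 1 ≤ 3)
  exact (InnerProductSpace.toDual ℝ (E n)).symm.contDiff.comp_contDiffOn h

lemma fderiv_gradient_apply {u : E n → ℝ} {x : E n}
    (hdg : DifferentiableAt ℝ (gradient u) x) (v : E n) (k : Fin n) :
    fderiv ℝ (gradient u) x v k = fderiv ℝ (pd u k) x v := by
  have h1 : (fun y => (EuclideanSpace.proj k (𝕜 := ℝ)) (gradient u y)) = pd u k :=
    funext fun y => grad_coord u y k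
  have h2 := ((EuclideanSpace.proj k (𝕜 := ℝ)).hasFDerivAt.comp x hdg.hasFDerivAt).fderiv
  rw [← h1]
  rw [show (fun y => (EuclideanSpace.proj k (𝕜 := ℝ)) (gradient u y)) = (⇑(EuclideanSpace.proj k (𝕜 := ℝ)) ∘ gradient u) from rfl, h2]
  rfl

lemma algebra_lemma {n : ℕ} (A H : Fin n → Fin n → ℝ) (B T : Fin n → Fin n → Fin n → ℝ)
    (P : Fin n → ℝ) (hH : ∀ i j, H i j = H j i) :
    ∑ i, ∑ j, A i j * (∑ k, ((∑ l, A k l * H l j) * H k i + P k * T i j k))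
      = (∑ i, ∑ j, ∑ k, ∑ l, A i j * A k l * H i k * H j l)
        + (∑ k, (∑ i, ∑ j, ((∑ l, H l k * B i j l) * H i j + A i j * T i j k)) * P k)
        - ∑ i, ∑ j, ∑ l, B i j l * (∑ k, H k l * P k) * H i j := by
  have e1 : ∑ i, ∑ j, A i j * (∑ k, ((∑ l, A k l * H l j) * H k i + P k * T i j k))
      = (∑ i, ∑ j, ∑ k, ∑ l, A i j * A k l * H i k * H j l)
        + ∑ i, ∑ j, ∑ k, A i j * P k * T i j k := by
    rw [← Finset.sum_add_distrib]
    refine Finset.sum_congr rfl fun i _ => ?_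
    rw [← Finset.sum_add_distrib]
    refine Finset.sum_congr rfl fun j _ => ?_
    rw [Finset.mul_sum, ← Finset.sum_add_distrib]
    refine Finset.sum_congr rfl fun k _ => ?_
    rw [mul_add]
    congr 1
    · rw [Finset.sum_mul, Finset.mul_sum]
      refine Finset.sum_congr rfl fun l _ => ?_
      rw [hH l j, hH k i]; ring
    · ring
  have e2 : ∑ k, (∑ i, ∑ j, ((∑ l, H l k * B i j l) * H i j + A i j * T i j k)) * P k
      = (∑ i, ∑ j, ∑ l, B i j l * (∑ k, H k l * P k) * H i j)
        + ∑ i, ∑ j, ∑ k, A i j * P k * T i j k := by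
    have : ∀ k, (∑ i, ∑ j, ((∑ l, H l k * B i j l) * H i j + A i j * T i j k)) * P k
        = (∑ i, ∑ j, ∑ l, B i j l * (H l k * P k) * H i j)
          + ∑ i, ∑ j, A i j * P k * T i j k := by
      intro k
      rw [Finset.sum_mul, ← Finset.sum_add_distrib]
      refine Finset.sum_congr rfl fun i _ => ?_
      rw [Finset.sum_mul, ← Finset.sum_add_distrib]
      refine Finset.sum_congr rfl fun j _ => ?_
      rw [add_mul, Finset.sum_mul, Finset.sum_mul]
      congr 1
      · refine Finset.sum_congr rfl fun l _ => ?_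
        ring
      · ring
    rw [Finset.sum_congr rfl fun k _ => this k, Finset.sum_add_distrib]
    congr 1
    · rw [Finset.sum_comm]
      refine Finset.sum_congr rfl fun i _ => ?_
      rw [Finset.sum_comm]
      refine Finset.sum_congr rfl fun j _ => ?_
      rw [Finset.sum_comm]
      refine Finset.sum_congr rfl fun l _ => ?_
      rw [Finset.mul_sum, Finset.sum_mul]
      refine Finset.sum_congr rfl fun k _ => ?_
      rw [hH k l]
    · rw [Finset.sum_comm]
      exact Finset.sum_congr rfl fun y _ => Finset.sum_comm
  rw [e1, e2]; ring

end helpers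

/-- Bochner-type formula for the Finsler–Laplacian. -/
theorem bochner_formula {n : ℕ} (hn : 1 ≤ n)
    (F : EuclideanSpace ℝ (Fin n) → ℝ) (hF : IsStronglyConvexMinkowskiNormC3 F)
    (U : Set (EuclideanSpace ℝ (Fin n))) (hU : IsOpen U)
    (u : EuclideanSpace ℝ (Fin n) → ℝ) (hu : ContDiffOn ℝ 3 u U)
    (x : EuclideanSpace ℝ (Fin n)) (hx : x ∈ U) (hgrad : gradient u x ≠ 0) :
    ∑ i, ∑ j, aCoeff F i j (gradient u x) *
        pd (pd (fun y => F (gradient u y) ^ 2 / 2) i) j x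
      = (∑ i, ∑ j, ∑ k, ∑ l, aCoeff F i j (gradient u x) * aCoeff F k l (gradient u x) *
            pd (pd u i) k x * pd (pd u j) l x)
        + (∑ k, pd (fun y => ∑ i, ∑ j, aCoeff F i j (gradient u y) * pd (pd u i) j y) k x *
            pd (fun η => F η ^ 2 / 2) k (gradient u x))
        - ∑ i, ∑ j, ∑ l, aCoeff3 F i j l (gradient u x) *
            pd (fun y => F (gradient u y) ^ 2 / 2) l x * pd (pd u i) j x := by
  classical
  -- basic smoothness
  have hΦC3 : ContDiffOn ℝ 3 (fun η => F η ^ 2 / 2) {(0 : EuclideanSpace ℝ (Fin n))}ᶜ := (hF.contDiff3.pow 2).div_const 2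
  have hgC2 : ContDiffOn ℝ 2 (gradient u) U := grad_contDiffOn hu hU
  have hgd : ∀ y ∈ U, DifferentiableAt ℝ (gradient u) y := fun y hy =>
    ((hgC2 y hy).contDiffAt (hU.mem_nhds hy)).differentiableAt (by norm_num)
  have huAt : ∀ y ∈ U, ContDiffAt ℝ 3 u y := fun y hy => (hu y hy).contDiffAt (hU.mem_nhds hy)
  -- the open set V where the gradient is nonzero
  set V : Set (EuclideanSpace ℝ (Fin n)) := U ∩ gradient u ⁻¹' {(0 : EuclideanSpace ℝ (Fin n))}ᶜ with hVdef
  have hVopen : IsOpen V := hgC2.continuousOn.isOpen_inter_preimage hU isOpen_compl_singleton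
  have hxV : x ∈ V := ⟨hx, hgrad⟩
  have hVnhds : V ∈ nhds x := hVopen.mem_nhds hxV
  -- partial derivatives of u
  have hpdu : ∀ k, ContDiffOn ℝ 2 (pd u k) U := fun k => contDiffOn_pd hu hU (by norm_num) k
  have hpdu2 : ∀ k i, ContDiffOn ℝ 1 (pd (pd u k) i) U := fun k i =>
    contDiffOn_pd (hpdu k) hU (by norm_num) i
  have hpdu2d : ∀ k i, DifferentiableAt ℝ (pd (pd u k) i) x := fun k i =>
    ((hpdu2 k i x hx).contDiffAt (hU.mem_nhds hx)).differentiableAt (by norm_num)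
  -- partial derivatives of Φ
  have hΦ1 : ∀ k, ContDiffOn ℝ 2 (pd (fun η => F η ^ 2 / 2) k) {(0 : EuclideanSpace ℝ (Fin n))}ᶜ := fun k =>
    contDiffOn_pd hΦC3 isOpen_compl_singleton (by norm_num) k
  have hΦ1d : ∀ k, DifferentiableAt ℝ (pd (fun η => F η ^ 2 / 2) k) (gradient u x) := fun k =>
    ((hΦ1 k _ hgrad).contDiffAt (isOpen_compl_singleton.mem_nhds hgrad)).differentiableAt
      (by norm_num)
  have hΦ2 : ∀ k l, ContDiffOn ℝ 1 (pd (pd (fun η => F η ^ 2 / 2) k) l) {(0 : EuclideanSpace ℝ (Fin n))}ᶜ := fun k l =>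
    contDiffOn_pd (hΦ1 k) isOpen_compl_singleton (by norm_num) l
  have hΦ2d : ∀ k l, DifferentiableAt ℝ (pd (pd (fun η => F η ^ 2 / 2) k) l) (gradient u x) :=
    fun k l => ((hΦ2 k l _ hgrad).contDiffAt
      (isOpen_compl_singleton.mem_nhds hgrad)).differentiableAt (by norm_num)
  -- compositions with the gradient, differentiable at x
  have hcomp1 : ∀ k, DifferentiableAt ℝ (fun y => pd (fun η => F η ^ 2 / 2) k (gradient u y)) x :=
    fun k => (hΦ1d k).comp x (hgd x hx)
  have hcomp2 : ∀ i j, DifferentiableAt ℝ (fun y => aCoeff F i j (gradient u y)) x :=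
    fun i j => (hΦ2d i j).comp x (hgd x hx)
  -- Step A : first derivative of  y ↦ ½F(∇u y)²  on V
  have stepA : ∀ (i : Fin n), ∀ y ∈ V, pd (fun z => F (gradient u z) ^ 2 / 2) i y
      = ∑ k, pd (pd u k) i y * pd (fun η => F η ^ 2 / 2) k (gradient u y) := by
    intro i y hy
    have hΦd : DifferentiableAt ℝ (fun η => F η ^ 2 / 2) (gradient u y) :=
      ((hΦC3 _ hy.2).contDiffAt (isOpen_compl_singleton.mem_nhds hy.2)).differentiableAt
        (by norm_num)
    rw [pd_chain hΦd (hgd y hy.1) i]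
    refine Finset.sum_congr rfl fun k _ => ?_
    rw [fderiv_gradient_apply (hgd y hy.1)]
    rfl
  -- symmetry of second derivatives of u at points of U
  have hHsym : ∀ i j, pd (pd u i) j x = pd (pd u j) i x := fun i j =>
    schwarz ((huAt x hx).of_le (by norm_num)) i j
  -- symmetry of third derivatives of u at x
  have hT : ∀ k i j, pd (pd (pd u k) i) j x = pd (pd (pd u i) j) k x := by
    intro k i j
    have h1 : pd (pd u k) i =ᶠ[nhds x] pd (pd u i) k := by
      filter_upwards [hU.mem_nhds hx] with y hy
      exact schwarz ((huAt y hy).of_le (by norm_num)) k i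
    rw [pd_congr h1 j]
    exact schwarz ((hpdu i x hx).contDiffAt (hU.mem_nhds hx)) k j
  -- Step B : second derivatives of w at x
  have stepB : ∀ i j, pd (pd (fun y => F (gradient u y) ^ 2 / 2) i) j x
      = ∑ k, ((∑ l, aCoeff F k l (gradient u x) * pd (pd u l) j x) * pd (pd u k) i x
          + pd (fun η => F η ^ 2 / 2) k (gradient u x) * pd (pd (pd u i) j) k x) := by
    intro i j
    have h1 : pd (fun y => F (gradient u y) ^ 2 / 2) i =ᶠ[nhds x]
        fun y => ∑ k, pd (pd u k) i y * pd (fun η => F η ^ 2 / 2) k (gradient u y) := by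
      filter_upwards [hVnhds] with y hy
      exact stepA i y hy
    rw [pd_congr h1 j,
      pd_sum Finset.univ (f := fun k y => pd (pd u k) i y * pd (fun η => F η ^ 2 / 2) k (gradient u y)) (fun k _ => ((hpdu2d k i).mul (hcomp1 k))) j]
    refine Finset.sum_congr rfl fun k _ => ?_
    rw [pd_mul (hpdu2d k i) (hcomp1 k) j]
    have h2 : pd (fun y => pd (fun η => F η ^ 2 / 2) k (gradient u y)) j x
        = ∑ l, aCoeff F k l (gradient u x) * pd (pd u l) j x := by
      rw [pd_chain (hΦ1d k) (hgd x hx) j]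
      refine Finset.sum_congr rfl fun l _ => ?_
      rw [fderiv_gradient_apply (hgd x hx)]
      rw [mul_comm]
      rfl
    rw [h2, hT k i j]
    ring
  -- Step Q : derivative of the Finsler Laplacian at x
  have stepQ : ∀ k, pd (fun y => ∑ i, ∑ j, aCoeff F i j (gradient u y) * pd (pd u i) j y) k x
      = ∑ i, ∑ j, ((∑ l, pd (pd u l) k x * aCoeff3 F i j l (gradient u x)) * pd (pd u i) j x
          + aCoeff F i j (gradient u x) * pd (pd (pd u i) j) k x) := by
    intro k
    have hin : ∀ i j : Fin n,
        DifferentiableAt ℝ (fun y => aCoeff F i j (gradient u y) * pd (pd u i) j y) x :=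
      fun i j => (hcomp2 i j).mul (hpdu2d i j)
    rw [pd_sum Finset.univ (fun i _ => DifferentiableAt.fun_sum (fun j _ => hin i j)) k]
    refine Finset.sum_congr rfl fun i _ => ?_
    rw [pd_sum Finset.univ (fun j _ => hin i j) k]
    refine Finset.sum_congr rfl fun j _ => ?_
    rw [pd_mul (hcomp2 i j) (hpdu2d i j) k]
    have h2 : pd (fun y => aCoeff F i j (gradient u y)) k x
        = ∑ l, pd (pd u l) k x * aCoeff3 F i j l (gradient u x) := by
      show pd (fun y => pd (pd (fun η => F η ^ 2 / 2) i) j (gradient u y)) k x = _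
      rw [pd_chain (hΦ2d i j) (hgd x hx) k]
      refine Finset.sum_congr rfl fun l _ => ?_
      rw [fderiv_gradient_apply (hgd x hx)]
      rfl
    rw [h2]
  -- put everything together
  have main := algebra_lemma (fun i j => aCoeff F i j (gradient u x))
    (fun i j => pd (pd u i) j x)
    (fun i j l => aCoeff3 F i j l (gradient u x))
    (fun i j k => pd (pd (pd u i) j) k x)
    (fun k => pd (fun η => F η ^ 2 / 2) k (gradient u x)) hHsym
  calc ∑ i, ∑ j, aCoeff F i j (gradient u x) *
        pd (pd (fun y => F (gradient u y) ^ 2 / 2) i) j x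
      = ∑ i, ∑ j, aCoeff F i j (gradient u x) *
          (∑ k, ((∑ l, aCoeff F k l (gradient u x) * pd (pd u l) j x) * pd (pd u k) i x
            + pd (fun η => F η ^ 2 / 2) k (gradient u x) * pd (pd (pd u i) j) k x)) := by
        exact Finset.sum_congr rfl fun i _ => Finset.sum_congr rfl fun j _ => by rw [stepB i j]
    _ = (∑ i, ∑ j, ∑ k, ∑ l, aCoeff F i j (gradient u x) * aCoeff F k l (gradient u x) *
            pd (pd u i) k x * pd (pd u j) l x)
        + (∑ k, (∑ i, ∑ j, ((∑ l, pd (pd u l) k x * aCoeff3 F i j l (gradient u x)) *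
              pd (pd u i) j x + aCoeff F i j (gradient u x) * pd (pd (pd u i) j) k x)) *
            pd (fun η => F η ^ 2 / 2) k (gradient u x))
        - ∑ i, ∑ j, ∑ l, aCoeff3 F i j l (gradient u x) *
            (∑ k, pd (pd u k) l x * pd (fun η => F η ^ 2 / 2) k (gradient u x)) *
            pd (pd u i) j x := main
    _ = _ := by
        congr 1
        · congr 1
          refine Finset.sum_congr rfl fun k _ => ?_
          rw [stepQ k]
        · refine Finset.sum_congr rfl fun i _ => Finset.sum_congr rfl fun j _ =>
            Finset.sum_congr rfl fun l _ => ?_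
          rw [stepA l x hxV]
end
end

section
/- (Kato-type inequality) Let n ≥ 1, let F : ℝⁿ → [0,∞) be a strongly convex Minkowski norm of class C² on ℝⁿ∖{0}, let ξ ∈ ℝⁿ∖{0}, write F_k = ∂F/∂ξ_k(ξ) and a_{ij} = ∂²(½F²)/∂ξ_i∂ξ_j(ξ). Then for every symmetric n×n real matrix U = (U_{ij}): Σ_{i,j,k,l} a_{ij} a_{kl} U_{ik} U_{jl} ≥ Σ_{i,j,k,l} a_{ij} F_k F_l U_{ik} U_{jl}. -/
open Real

noncomputable section

/-- A strongly convex Minkowski norm of class C²: additionally `F` is C² away from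
the origin and the Hessian of `F²` is positive definite away from the origin. -/
structure IsStronglyConvexMinkowskiNormC2 {n : ℕ}
    (F : EuclideanSpace ℝ (Fin n) → ℝ) extends IsMinkowskiNorm F : Prop where
  contDiff2 : ContDiffOn ℝ 2 F {(0 : EuclideanSpace ℝ (Fin n))}ᶜ
  posDef : ∀ ξ : EuclideanSpace ℝ (Fin n), ξ ≠ 0 →
    ∀ V : EuclideanSpace ℝ (Fin n), V ≠ 0 →
      0 < ∑ i, ∑ j, aCoeff F i j ξ * V i * V j

namespace KatoAux

open Matrix

lemma clm_expand {n : ℕ} (L : EuclideanSpace ℝ (Fin n) →L[ℝ] ℝ) (x : EuclideanSpace ℝ (Fin n)) :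
    L x = ∑ i, x i * L (EuclideanSpace.single i 1) := by
  have hx : x = ∑ i, x i • EuclideanSpace.single i 1 := by
    ext j
    rw [WithLp.ofLp_sum, Finset.sum_apply]
    simp [EuclideanSpace.single_apply]
  conv_lhs => rw [hx]
  rw [map_sum]
  simp [mul_comm]

variable {n : ℕ} {F : EuclideanSpace ℝ (Fin n) → ℝ} {ξ : EuclideanSpace ℝ (Fin n)}

section
variable (hC : ContDiffOn ℝ 2 F {(0 : EuclideanSpace ℝ (Fin n))}ᶜ)
  (homog : ∀ (t : ℝ) (x : EuclideanSpace ℝ (Fin n)), F (t • x) = |t| * F x)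
  (hξ : ξ ≠ 0)

local notation "g" => (fun η => F η ^ 2 / 2 : EuclideanSpace ℝ (Fin n) → ℝ)

include hC in
lemma gCDA {x : EuclideanSpace ℝ (Fin n)} (hx : x ≠ 0) : ContDiffAt ℝ 2 g x := by
  have := hC.contDiffAt (isOpen_compl_singleton.mem_nhds (by simpa using hx))
  exact (this.pow 2).div_const 2

include hC in
lemma gDiff {x : EuclideanSpace ℝ (Fin n)} (hx : x ≠ 0) : DifferentiableAt ℝ g x :=
  (gCDA hC hx).differentiableAt two_ne_zero

omit hC in
include homog in
lemma ghomog2 (t : ℝ) (x : EuclideanSpace ℝ (Fin n)) : g (t • x) = t ^ 2 * g x := by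
  simp only [homog, mul_pow, sq_abs]; ring

-- gradient homogeneity
include hC homog hξ in
lemma grad_homog {t : ℝ} (ht : 0 < t) :
    fderiv ℝ g (t • ξ) = t • fderiv ℝ g ξ := by
  have htξ : t • ξ ≠ 0 := smul_ne_zero (ne_of_gt ht) hξ
  have h1 : HasFDerivAt g (fderiv ℝ g (t • ξ)) (t • ξ) := (gDiff hC htξ).hasFDerivAt
  have hsmul : HasFDerivAt (fun y : EuclideanSpace ℝ (Fin n) => t • y)
      (t • ContinuousLinearMap.id ℝ (EuclideanSpace ℝ (Fin n))) ξ :=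
    (hasFDerivAt_id ξ).const_smul t
  have comp := h1.comp ξ hsmul
  have heq : (fun y => g (t • y)) = fun y => t ^ 2 • g y := by
    funext y; rw [ghomog2 homog]; rfl
  have h2 : HasFDerivAt (fun y => g (t • y)) (t ^ 2 • fderiv ℝ g ξ) ξ := by
    rw [heq]; exact (gDiff hC hξ).hasFDerivAt.const_smul (t ^ 2)
  have huniq := comp.unique h2
  ext w
  have h4 := congrArg (fun (L : EuclideanSpace ℝ (Fin n) →L[ℝ] ℝ) => L w) huniq
  simp only [ContinuousLinearMap.coe_comp', Function.comp_apply,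
    ContinuousLinearMap.smul_apply, ContinuousLinearMap.coe_smul',
    Pi.smul_apply, ContinuousLinearMap.coe_id', id_eq, smul_eq_mul] at h4 ⊢
  rw [_root_.map_smul, smul_eq_mul] at h4
  have ht' : t ≠ 0 := ne_of_gt ht
  have h5 : t * ((fderiv ℝ g (t • ξ)) w) = t * (t * (fderiv ℝ g ξ) w) := by
    rw [h4]; ring
  exact mul_left_cancel₀ ht' h5

-- Euler identity degree 1 for g's gradient components
include hC homog hξ in
lemma euler_second (i : Fin n) : ∑ j, aCoeff F i j ξ * ξ j = pd g i ξ := by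
  set e : EuclideanSpace ℝ (Fin n) := EuclideanSpace.single i 1
  set φ : EuclideanSpace ℝ (Fin n) → ℝ := fun x => fderiv ℝ g x e with hφ
  have hgd : DifferentiableAt ℝ (fderiv ℝ g) ξ :=
    ((gCDA hC hξ).fderiv_right (m := 1) (by norm_num)).differentiableAt one_ne_zero
  have hφd : HasFDerivAt φ ((ContinuousLinearMap.apply ℝ ℝ e).comp (fderiv ℝ (fderiv ℝ g) ξ)) ξ :=
    ((ContinuousLinearMap.apply ℝ ℝ e).hasFDerivAt).comp ξ hgd.hasFDerivAt
  have hφf : fderiv ℝ φ ξ = (ContinuousLinearMap.apply ℝ ℝ e).comp (fderiv ℝ (fderiv ℝ g) ξ) :=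
    hφd.fderiv
  -- line derivative
  have hline : HasDerivAt (fun t : ℝ => t • ξ) ξ 1 := by
    simpa using (hasDerivAt_id (1 : ℝ)).smul_const ξ
  have hφd1 : HasFDerivAt φ (((ContinuousLinearMap.apply ℝ ℝ) e).comp
      (fderiv ℝ (fderiv ℝ g) ξ)) ((1:ℝ) • ξ) := by rwa [one_smul]
  have lineA : HasDerivAt (fun t : ℝ => φ (t • ξ)) (fderiv ℝ φ ξ ξ) 1 := by
    have h := hφd1.comp_hasDerivAt 1 hline
    rw [hφf]
    exact h
  have heventu : (fun t : ℝ => φ (t • ξ)) =ᶠ[nhds 1] fun t : ℝ => t * φ ξ := by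
    filter_upwards [eventually_gt_nhds (by norm_num : (0:ℝ) < 1)] with t ht
    rw [hφ]
    simp only
    rw [grad_homog hC homog hξ ht]
    simp
  have lineB : HasDerivAt (fun t : ℝ => φ (t • ξ)) (φ ξ) 1 := by
    have : HasDerivAt (fun t : ℝ => t * φ ξ) (φ ξ) 1 := by
      simpa using (hasDerivAt_id (1 : ℝ)).mul_const (φ ξ)
    exact this.congr_of_eventuallyEq heventu
  have keyξ : fderiv ℝ φ ξ ξ = φ ξ := lineA.unique lineB
  have expand := clm_expand (fderiv ℝ φ ξ) ξ
  rw [keyξ] at expand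
  have : ∀ j, fderiv ℝ φ ξ (EuclideanSpace.single j 1) = aCoeff F i j ξ := fun j => rfl
  simp only [this] at expand
  calc ∑ j, aCoeff F i j ξ * ξ j = ∑ j, ξ j * aCoeff F i j ξ :=
        Finset.sum_congr rfl fun j _ => mul_comm _ _
    _ = φ ξ := expand.symm
    _ = pd g i ξ := rfl

-- Euler identity degree 2 for g
include hC homog hξ in
lemma euler_first : ∑ k, ξ k * pd g k ξ = F ξ ^ 2 := by
  have hgdiff : HasFDerivAt g (fderiv ℝ g ξ) ξ := (gDiff hC hξ).hasFDerivAt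
  have hline : HasDerivAt (fun t : ℝ => t • ξ) ξ 1 := by
    simpa using (hasDerivAt_id (1 : ℝ)).smul_const ξ
  have hgdiff1 : HasFDerivAt g (fderiv ℝ g ξ) ((1:ℝ) • ξ) := by rwa [one_smul]
  have lineA : HasDerivAt (fun t : ℝ => g (t • ξ)) (fderiv ℝ g ξ ξ) 1 := by
    have h := hgdiff1.comp_hasDerivAt 1 hline; exact h
  have lineB : HasDerivAt (fun t : ℝ => g (t • ξ)) (2 * g ξ) 1 := by
    have heq : (fun t : ℝ => g (t • ξ)) = fun t : ℝ => t ^ 2 * g ξ := by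
      funext t; exact ghomog2 homog t ξ
    rw [heq]
    simpa using (hasDerivAt_pow 2 (1 : ℝ)).mul_const (g ξ)
  have key : fderiv ℝ g ξ ξ = 2 * g ξ := lineA.unique lineB
  have expand := clm_expand (fderiv ℝ g ξ) ξ
  rw [key] at expand
  have : ∑ k, ξ k * pd g k ξ = 2 * g ξ := expand.symm
  rw [this]; ring

-- chain rule: pd g = F * pd F
include hC in
lemma pd_g_eq (hξ : ξ ≠ 0) (k : Fin n) : pd g k ξ = F ξ * pd F k ξ := by
  have hFd : DifferentiableAt ℝ F ξ :=
    ((hC.contDiffAt (isOpen_compl_singleton.mem_nhds (by simpa using hξ)))).differentiableAt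
      two_ne_zero
  have hq : HasDerivAt (fun y : ℝ => y ^ 2 / 2) (F ξ) (F ξ) := by
    simpa using (hasDerivAt_pow 2 (F ξ)).div_const 2
  have hg : HasFDerivAt g (F ξ • fderiv ℝ F ξ) ξ := hq.comp_hasFDerivAt ξ hFd.hasFDerivAt
  rw [pd, hg.fderiv]
  simp [pd]
end

lemma sum4_comm {n : ℕ} (f : Fin n → Fin n → Fin n → Fin n → ℝ) :
    ∑ k, ∑ l, ∑ j, ∑ i, f i j k l = ∑ i, ∑ j, ∑ k, ∑ l, f i j k l := by
  calc ∑ k, ∑ l, ∑ j, ∑ i, f i j k l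
      = ∑ k, ∑ j, ∑ i, ∑ l, f i j k l := Finset.sum_congr rfl fun k _ => by
        rw [Finset.sum_comm]
        exact Finset.sum_congr rfl fun j _ => Finset.sum_comm
    _ = ∑ j, ∑ k, ∑ i, ∑ l, f i j k l := Finset.sum_comm
    _ = ∑ j, ∑ i, ∑ k, ∑ l, f i j k l := Finset.sum_congr rfl fun j _ => Finset.sum_comm
    _ = ∑ i, ∑ j, ∑ k, ∑ l, f i j k l := Finset.sum_comm

lemma trace_mul_psd_nonneg {m : ℕ} {M B : Matrix (Fin m) (Fin m) ℝ}
    (hM : M.PosSemidef) (hB : B.PosSemidef) : 0 ≤ (M * B).trace := by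
  open scoped MatrixOrder in
  have hS : (CFC.sqrt B).PosSemidef := (CFC.sqrt_nonneg B).posSemidef
  open scoped MatrixOrder in
  have h1 : M * B = M * (CFC.sqrt B * CFC.sqrt B) := by rw [CFC.sqrt_mul_sqrt_self B hB.nonneg]
  have h2 : ((M * CFC.sqrt B) * CFC.sqrt B).trace = (CFC.sqrt B * (M * CFC.sqrt B)).trace :=
    Matrix.trace_mul_comm _ _
  have h3 : (CFC.sqrt B * (M * CFC.sqrt B)) = (CFC.sqrt B)ᴴ * M * CFC.sqrt B := by
    rw [hS.isHermitian, Matrix.mul_assoc]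
  have hPSD : ((CFC.sqrt B)ᴴ * M * CFC.sqrt B).PosSemidef := hM.conjTranspose_mul_mul_same _
  have h4 : ∀ i, 0 ≤ ((CFC.sqrt B)ᴴ * M * CFC.sqrt B) i i := fun i => by simpa using hPSD.dotProduct_mulVec_nonneg (Pi.single i 1)
  have h5 := Finset.sum_nonneg fun i (_ : i ∈ Finset.univ) => h4 i
  rw [h1, ← Matrix.mul_assoc, h2, h3]
  exact h5

-- abstract algebraic core
lemma core {n : ℕ} (A : Fin n → Fin n → ℝ) (v : Fin n → ℝ) (ξ : EuclideanSpace ℝ (Fin n))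
    (c : ℝ) (hc : 0 < c)
    (hsym : ∀ i j, A i j = A j i)
    (hq : ∀ V : EuclideanSpace ℝ (Fin n), 0 ≤ ∑ i, ∑ j, A i j * V i * V j)
    (hAξ : ∀ i, ∑ j, A i j * ξ j = c * v i)
    (hξv : ∑ k, ξ k * v k = c)
    (U : Matrix (Fin n) (Fin n) ℝ) :
    ∑ i, ∑ j, ∑ k, ∑ l, A i j * v k * v l * U i k * U j l
      ≤ ∑ i, ∑ j, ∑ k, ∑ l, A i j * A k l * U i k * U j l := by
  -- Cauchy-Schwarz: (∑ v·V)² ≤ ∑∑ A V V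
  have hCS : ∀ V : EuclideanSpace ℝ (Fin n),
      (∑ k, v k * V k) ^ 2 ≤ ∑ i, ∑ j, A i j * V i * V j := by
    intro V
    set sVV := ∑ i, ∑ j, A i j * V i * V j with hsVV
    set sξV := ∑ i, ∑ j, A i j * ξ i * V j with hsξV
    set sξξ := ∑ i, ∑ j, A i j * ξ i * ξ j with hsξξ
    have key : ∀ t : ℝ, 0 ≤ sVV * (t * t) + (2 * sξV) * t + sξξ := by
      intro t
      have h := hq (ξ + t • V)
      have hflip : ∑ i, ∑ j, A i j * V i * ξ j = ∑ i, ∑ j, A i j * ξ i * V j := by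
        rw [Finset.sum_comm]
        exact Finset.sum_congr rfl fun a _ => Finset.sum_congr rfl fun b _ => by
          rw [hsym b a]; ring
      have expand : ∑ i, ∑ j, A i j * (ξ + t • V) i * (ξ + t • V) j
          = sVV * (t * t) + (2 * sξV) * t + sξξ := by
        calc ∑ i, ∑ j, A i j * (ξ + t • V) i * (ξ + t • V) j
            = ∑ i, ∑ j, ((A i j * V i * V j) * (t * t) + ((A i j * ξ i * V j) * t
                + ((A i j * V i * ξ j) * t + A i j * ξ i * ξ j))) :=
              Finset.sum_congr rfl fun i _ => Finset.sum_congr rfl fun j _ => by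
                have h1 : (ξ + t • V) i = ξ i + t * V i := rfl
                have h2 : (ξ + t • V) j = ξ j + t * V j := rfl
                rw [h1, h2]; ring
          _ = (∑ i, ∑ j, A i j * V i * V j) * (t * t) + ((∑ i, ∑ j, A i j * ξ i * V j) * t
                + ((∑ i, ∑ j, A i j * V i * ξ j) * t + ∑ i, ∑ j, A i j * ξ i * ξ j)) := by
              simp_rw [Finset.sum_add_distrib, Finset.sum_mul]
          _ = sVV * (t * t) + (2 * sξV) * t + sξξ := by
              rw [hflip, ← hsVV, ← hsξV, ← hsξξ]; ring
      rw [expand] at h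
      exact h
    have hd : discrim sVV (2 * sξV) sξξ ≤ 0 := discrim_le_zero key
    rw [discrim] at hd
    -- sξξ = c*c, sξV = c * ∑ v V
    have hξξ : sξξ = c * c := by
      rw [hsξξ]
      have h6 : ∀ i, ∑ j, A i j * ξ i * ξ j = ξ i * (c * v i) := by
        intro i
        calc ∑ j, A i j * ξ i * ξ j = ξ i * ∑ j, A i j * ξ j := by
              rw [Finset.mul_sum]
              exact Finset.sum_congr rfl fun j _ => by ring
          _ = ξ i * (c * v i) := by rw [hAξ i]
      simp_rw [h6]
      rw [← hξv, Finset.sum_mul]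
      exact Finset.sum_congr rfl fun i _ => by ring
    have hξV : sξV = c * ∑ k, v k * V k := by
      rw [hsξV, Finset.sum_comm]
      have h7 : ∀ j, ∑ i, A i j * ξ i * V j = (c * v j) * V j := by
        intro j
        calc ∑ i, A i j * ξ i * V j = (∑ i, A j i * ξ i) * V j := by
              rw [Finset.sum_mul]
              exact Finset.sum_congr rfl fun i _ => by rw [hsym i j]
          _ = (c * v j) * V j := by rw [hAξ j]
      simp_rw [h7]
      rw [Finset.mul_sum]
      exact Finset.sum_congr rfl fun k _ => by ring
    rw [hξV, hξξ] at hd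
    have hc2 : 0 < c * c := mul_pos hc hc
    nlinarith [hd]
  -- matrices
  set Am : Matrix (Fin n) (Fin n) ℝ := Matrix.of A with hAm
  set Bm : Matrix (Fin n) (Fin n) ℝ := Matrix.of (fun k l => A k l - v k * v l) with hBm
  have hAmPSD : Am.PosSemidef := by
    refine Matrix.PosSemidef.of_dotProduct_mulVec_nonneg ?_ ?_
    · ext i j; simp [hAm, Matrix.conjTranspose_apply, hsym i j]
    · intro x
      have := hq (WithLp.toLp 2 x)
      simpa [dotProduct, Matrix.mulVec, dotProduct, hAm, Finset.mul_sum,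
        mul_comm, mul_assoc, mul_left_comm] using this
  have hBmPSD : Bm.PosSemidef := by
    refine Matrix.PosSemidef.of_dotProduct_mulVec_nonneg ?_ ?_
    · ext i j; simp [hBm, Matrix.conjTranspose_apply, hsym i j]; ring
    · intro x
      have h1 := hCS (WithLp.toLp 2 x)
      simp only [WithLp.ofLp_toLp] at h1
      have h2 : (∑ k, v k * x k) ^ 2 = ∑ i, ∑ j, (v i * v j) * x i * x j := by
        rw [sq, Finset.sum_mul_sum]
        exact Finset.sum_congr rfl fun i _ => Finset.sum_congr rfl fun j _ => by ring
      have : 0 ≤ ∑ i, ∑ j, (A i j - v i * v j) * x i * x j := by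
        have := sub_nonneg.mpr h1
        rw [h2] at this
        calc (0:ℝ) ≤ (∑ i, ∑ j, A i j * x i * x j) - ∑ i, ∑ j, (v i * v j) * x i * x j := this
          _ = ∑ i, ∑ j, (A i j - v i * v j) * x i * x j := by
            rw [← Finset.sum_sub_distrib]
            exact Finset.sum_congr rfl fun i _ => by
              rw [← Finset.sum_sub_distrib]
              exact Finset.sum_congr rfl fun j _ => by ring
      simpa [dotProduct, Matrix.mulVec, hBm, Finset.mul_sum,
        mul_comm, mul_assoc, mul_left_comm] using this
  have htr := trace_mul_psd_nonneg (hAmPSD.conjTranspose_mul_mul_same U) hBmPSD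
  have htr_eq : ((Uᴴ * Am * U) * Bm).trace
      = ∑ k, ∑ l, ∑ j, ∑ i, U i k * A i j * U j l * (A l k - v l * v k) := by
    simp only [Matrix.trace, Matrix.diag, Matrix.mul_apply, Matrix.conjTranspose_apply,
      Matrix.of_apply, star_trivial, Finset.sum_mul, hAm, hBm]
  rw [← sub_nonneg]
  have hsub : (∑ i, ∑ j, ∑ k, ∑ l, A i j * A k l * U i k * U j l)
      - ∑ i, ∑ j, ∑ k, ∑ l, A i j * v k * v l * U i k * U j l
      = ∑ i, ∑ j, ∑ k, ∑ l, (U i k * A i j * U j l * (A l k - v l * v k)) := by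
    rw [← Finset.sum_sub_distrib]
    refine Finset.sum_congr rfl fun i _ => ?_
    rw [← Finset.sum_sub_distrib]
    refine Finset.sum_congr rfl fun j _ => ?_
    rw [← Finset.sum_sub_distrib]
    refine Finset.sum_congr rfl fun k _ => ?_
    rw [← Finset.sum_sub_distrib]
    refine Finset.sum_congr rfl fun l _ => ?_
    rw [hsym l k]; ring
  rw [hsub, ← sum4_comm fun i j k l => U i k * A i j * U j l * (A l k - v l * v k), ← htr_eq]
  exact htr

lemma aCoeff_symm {n : ℕ} {F : EuclideanSpace ℝ (Fin n) → ℝ} {ξ : EuclideanSpace ℝ (Fin n)}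
    (hg : ContDiffAt ℝ 2 (fun η => F η ^ 2 / 2) ξ) (i j : Fin n) :
    aCoeff F i j ξ = aCoeff F j i ξ := by
  set g : EuclideanSpace ℝ (Fin n) → ℝ := fun η => F η ^ 2 / 2 with hgdef
  have hsym : IsSymmSndFDerivAt ℝ g ξ := hg.isSymmSndFDerivAt (by simp)
  have hd : DifferentiableAt ℝ (fderiv ℝ g) ξ :=
    (hg.fderiv_right (m := 1) (by norm_num)).differentiableAt one_ne_zero
  have key : ∀ v : EuclideanSpace ℝ (Fin n),
      fderiv ℝ (fun x => fderiv ℝ g x v) ξ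
        = (ContinuousLinearMap.apply ℝ ℝ v).comp (fderiv ℝ (fderiv ℝ g) ξ) := by
    intro v
    exact (((ContinuousLinearMap.apply ℝ ℝ v).hasFDerivAt).comp ξ hd.hasFDerivAt).fderiv
  have e1 : aCoeff F i j ξ
      = fderiv ℝ (fderiv ℝ g) ξ (EuclideanSpace.single j 1) (EuclideanSpace.single i 1) := by
    show fderiv ℝ (fun x => fderiv ℝ g x (EuclideanSpace.single i 1)) ξ (EuclideanSpace.single j 1) = _
    rw [key]; rfl
  have e2 : aCoeff F j i ξ
      = fderiv ℝ (fderiv ℝ g) ξ (EuclideanSpace.single i 1) (EuclideanSpace.single j 1) := by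
    show fderiv ℝ (fun x => fderiv ℝ g x (EuclideanSpace.single j 1)) ξ (EuclideanSpace.single i 1) = _
    rw [key]; rfl
  rw [e1, e2, hsym.eq]


end KatoAux

/-- Kato-type inequality:
`Σ a_{ij} a_{kl} U_{ik} U_{jl} ≥ Σ a_{ij} F_k F_l U_{ik} U_{jl}`
for every symmetric matrix `U`. -/
theorem kato_inequality {n : ℕ} (hn : 1 ≤ n)
    (F : EuclideanSpace ℝ (Fin n) → ℝ) (hF : IsStronglyConvexMinkowskiNormC2 F)
    (ξ : EuclideanSpace ℝ (Fin n)) (hξ : ξ ≠ 0)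
    (U : Matrix (Fin n) (Fin n) ℝ) (hU : U.IsSymm) :
    ∑ i, ∑ j, ∑ k, ∑ l, aCoeff F i j ξ * (pd F k ξ) * (pd F l ξ) * U i k * U j l
      ≤ ∑ i, ∑ j, ∑ k, ∑ l, aCoeff F i j ξ * aCoeff F k l ξ * U i k * U j l := by
  classical
  set A : Fin n → Fin n → ℝ := fun i j => aCoeff F i j ξ with hA
  set v : Fin n → ℝ := fun k => pd F k ξ with hv
  set c : ℝ := F ξ with hcdef
  have hC := hF.contDiff2
  have homog := hF.homog
  have hc : 0 < c := hF.pos ξ hξ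
  have hsym : ∀ i j, A i j = A j i := fun i j =>
    KatoAux.aCoeff_symm (KatoAux.gCDA hC hξ) i j
  have hq : ∀ V : EuclideanSpace ℝ (Fin n), 0 ≤ ∑ i, ∑ j, A i j * V i * V j := by
    intro V
    rcases eq_or_ne V 0 with rfl | hV
    · have : ∀ i : Fin n, (0 : EuclideanSpace ℝ (Fin n)) i = 0 := fun i => rfl
      simp [this]
    · exact le_of_lt (hF.posDef ξ hξ V hV)
  have hAξ : ∀ i, ∑ j, A i j * ξ j = c * v i := by
    intro i
    rw [hA]
    calc ∑ j, aCoeff F i j ξ * ξ j = pd (fun η => F η ^ 2 / 2) i ξ :=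
          KatoAux.euler_second hC homog hξ i
      _ = c * v i := KatoAux.pd_g_eq hC hξ i
  have hξv : ∑ k, ξ k * v k = c := by
    have h1 : ∑ k, ξ k * pd (fun η => F η ^ 2 / 2) k ξ = F ξ ^ 2 :=
      KatoAux.euler_first hC homog hξ
    have h2 : ∑ k, ξ k * (c * v k) = c * c := by
      calc ∑ k, ξ k * (c * v k) = ∑ k, ξ k * pd (fun η => F η ^ 2 / 2) k ξ :=
            Finset.sum_congr rfl fun k _ => by rw [KatoAux.pd_g_eq hC hξ k]
        _ = F ξ ^ 2 := h1
        _ = c * c := by rw [hcdef]; ring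
    have h3 : c * ∑ k, ξ k * v k = c * c := by
      rw [Finset.mul_sum]
      rw [← h2]
      exact Finset.sum_congr rfl fun k _ => by ring
    exact mul_left_cancel₀ (ne_of_gt hc) h3
  exact KatoAux.core A v ξ c hc hsym hq hAξ hξv U
end
end

section
/- (Extended curvature–dimension inequality) Let n ≥ 2, let F : ℝⁿ → [0,∞) be a strongly convex Minkowski norm of class C² on ℝⁿ∖{0}, let ξ ∈ ℝⁿ∖{0}, write F_k = ∂F/∂ξ_k(ξ) and a_{ij} = ∂²(½F²)/∂ξ_i∂ξ_j(ξ). Then for every symmetric n×n real matrix U = (U_{ij}): Σ_{i,j,k,l} a_{ij} a_{kl} U_{ik} U_{jl} ≥ (Σ_{i,j} a_{ij} U_{ij})²/n + (n/(n−1)) · ( (Σ_{i,j} a_{ij} U_{ij})/n − Σ_{i,j} F_i F_j U_{ij} )². -/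
open Real

noncomputable section

open Matrix

section Analysis

variable {n : ℕ} (F : EuclideanSpace ℝ (Fin n) → ℝ)

theorem analysis_facts (hF : IsStronglyConvexMinkowskiNormC2 F)
    (ξ : EuclideanSpace ℝ (Fin n)) (hξ : ξ ≠ 0) :
    (∀ i j, aCoeff F i j ξ = aCoeff F j i ξ)
    ∧ (∀ i, ∑ j, aCoeff F i j ξ * ξ j = F ξ * pd F i ξ)
    ∧ (∑ i, pd F i ξ * ξ i = F ξ) := by
  have hFpos : 0 < F ξ := hF.pos ξ hξ
  have hmem : {(0 : EuclideanSpace ℝ (Fin n))}ᶜ ∈ nhds ξ :=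
    (isOpen_compl_singleton).mem_nhds hξ
  have hF2 : ContDiffAt ℝ 2 F ξ := hF.contDiff2.contDiffAt hmem
  have hf2 : ContDiffAt ℝ 2 (fun η => F η ^ 2 / 2) ξ := (hF2.pow 2).div_const 2
  have hFd : DifferentiableAt ℝ F ξ := hF2.differentiableAt two_ne_zero
  have hfd : DifferentiableAt ℝ (fun η => F η ^ 2 / 2) ξ := hf2.differentiableAt two_ne_zero
  have hgd : DifferentiableAt ℝ (fderiv ℝ (fun η => F η ^ 2 / 2)) ξ :=
    (hf2.fderiv_right (m := 1) (by norm_num)).differentiableAt one_ne_zero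
  -- basis decomposition
  have hxsum : ∑ i, ξ i • EuclideanSpace.single i (1:ℝ) = ξ := by
    have h := (EuclideanSpace.basisFun (Fin n) ℝ).sum_repr ξ
    simpa [EuclideanSpace.basisFun_apply, EuclideanSpace.basisFun_repr] using h
  -- homogeneity of f = F^2/2
  have hfh : ∀ (t : ℝ) (η : EuclideanSpace ℝ (Fin n)),
      F (t • η) ^ 2 / 2 = t ^ 2 * (F η ^ 2 / 2) := by
    intro t η
    rw [hF.homog, mul_pow, sq_abs]
    ring
  -- gradient homogeneity
  have hgh : ∀ t : ℝ, t ≠ 0 →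
      fderiv ℝ (fun η => F η ^ 2 / 2) (t • ξ) = t • fderiv ℝ (fun η => F η ^ 2 / 2) ξ := by
    intro t ht
    have htξ : t • ξ ≠ 0 := smul_ne_zero ht hξ
    have hFt : ContDiffAt ℝ 2 F (t • ξ) :=
      hF.contDiff2.contDiffAt ((isOpen_compl_singleton).mem_nhds htξ)
    have hfdt : DifferentiableAt ℝ (fun η => F η ^ 2 / 2) (t • ξ) :=
      ((hFt.pow 2).div_const 2).differentiableAt two_ne_zero
    have hL : HasFDerivAt (fun η : EuclideanSpace ℝ (Fin n) => t • η)
        (t • ContinuousLinearMap.id ℝ (EuclideanSpace ℝ (Fin n))) ξ :=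
      (t • ContinuousLinearMap.id ℝ (EuclideanSpace ℝ (Fin n))).hasFDerivAt
    have h1 : HasFDerivAt (fun η => F (t • η) ^ 2 / 2)
        ((fderiv ℝ (fun η => F η ^ 2 / 2) (t • ξ)).comp
          (t • ContinuousLinearMap.id ℝ (EuclideanSpace ℝ (Fin n)))) ξ := by
      have := hfdt.hasFDerivAt.comp ξ hL
      exact this
    have h2 : HasFDerivAt (fun η => F (t • η) ^ 2 / 2)
        (t ^ 2 • fderiv ℝ (fun η => F η ^ 2 / 2) ξ) ξ := by
      have h3 : HasFDerivAt (fun η => t ^ 2 * (F η ^ 2 / 2))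
          (t ^ 2 • fderiv ℝ (fun η => F η ^ 2 / 2) ξ) ξ := hfd.hasFDerivAt.const_mul (t ^ 2)
      exact h3.congr_of_eventuallyEq (Filter.Eventually.of_forall fun η => hfh t η)
    have h4 := h1.unique h2
    have h5 : t • fderiv ℝ (fun η => F η ^ 2 / 2) (t • ξ)
        = t ^ 2 • fderiv ℝ (fun η => F η ^ 2 / 2) ξ := by
      rw [← h4]
      ext v
      simp [mul_comm]
    have h6 : fderiv ℝ (fun η => F η ^ 2 / 2) (t • ξ)
        = (t⁻¹ * t ^ 2) • fderiv ℝ (fun η => F η ^ 2 / 2) ξ := by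
      rw [← smul_smul, ← h5, smul_smul, inv_mul_cancel₀ ht, one_smul]
    rw [h6]
    congr 1
    field_simp
  -- second derivative contracted with ξ
  have hHxi : fderiv ℝ (fderiv ℝ (fun η => F η ^ 2 / 2)) ξ ξ
      = fderiv ℝ (fun η => F η ^ 2 / 2) ξ := by
    have hsm : HasDerivAt (fun t : ℝ => t • ξ) ξ 1 := by
      simpa using (hasDerivAt_id (1:ℝ)).smul_const ξ
    have hψ1 : HasDerivAt (fun t : ℝ => fderiv ℝ (fun η => F η ^ 2 / 2) (t • ξ))
        (fderiv ℝ (fderiv ℝ (fun η => F η ^ 2 / 2)) ξ ξ) 1 := by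
      have hgd1 : HasFDerivAt (fderiv ℝ (fun η => F η ^ 2 / 2))
          (fderiv ℝ (fderiv ℝ (fun η => F η ^ 2 / 2)) ξ) ((1:ℝ) • ξ) := by
        rw [one_smul]; exact hgd.hasFDerivAt
      have := hgd1.comp_hasDerivAt 1 hsm
      exact this
    have hψ2 : HasDerivAt (fun t : ℝ => fderiv ℝ (fun η => F η ^ 2 / 2) (t • ξ))
        (fderiv ℝ (fun η => F η ^ 2 / 2) ξ) 1 := by
      have hbase : HasDerivAt (fun t : ℝ => t • fderiv ℝ (fun η => F η ^ 2 / 2) ξ)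
          (fderiv ℝ (fun η => F η ^ 2 / 2) ξ) 1 := by
        simpa using (hasDerivAt_id (1:ℝ)).smul_const (fderiv ℝ (fun η => F η ^ 2 / 2) ξ)
      refine hbase.congr_of_eventuallyEq ?_
      filter_upwards [eventually_ne_nhds (one_ne_zero (α := ℝ))] with t ht
      exact hgh t ht
    exact hψ1.unique hψ2
  -- Euler for F
  have hEuler : fderiv ℝ F ξ ξ = F ξ := by
    have hsm : HasDerivAt (fun t : ℝ => t • ξ) ξ 1 := by
      simpa using (hasDerivAt_id (1:ℝ)).smul_const ξ
    have hφ1 : HasDerivAt (fun t : ℝ => F (t • ξ)) (fderiv ℝ F ξ ξ) 1 := by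
      have hFd1 : HasFDerivAt F (fderiv ℝ F ξ) ((1:ℝ) • ξ) := by
        rw [one_smul]; exact hFd.hasFDerivAt
      have := hFd1.comp_hasDerivAt 1 hsm
      exact this
    have hφ2 : HasDerivAt (fun t : ℝ => F (t • ξ)) (F ξ) 1 := by
      have hbase : HasDerivAt (fun t : ℝ => t * F ξ) (F ξ) 1 := hasDerivAt_mul_const (F ξ)
      refine hbase.congr_of_eventuallyEq ?_
      filter_upwards [eventually_gt_nhds (zero_lt_one (α := ℝ))] with t ht
      rw [hF.homog, abs_of_pos ht]
    exact hφ1.unique hφ2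
  -- fderiv of f in terms of fderiv of F
  have hgradf : fderiv ℝ (fun η => F η ^ 2 / 2) ξ = F ξ • fderiv ℝ F ξ := by
    have h1 : HasFDerivAt (fun η => F η ^ 2 / 2)
        ((2:ℝ)⁻¹ • (F ξ • fderiv ℝ F ξ + F ξ • fderiv ℝ F ξ)) ξ := by
      have h2 := (hFd.hasFDerivAt.mul hFd.hasFDerivAt).mul_const ((2:ℝ)⁻¹)
      have h3 : (fun η => F η ^ 2 / 2) = fun η => F η * F η * (2:ℝ)⁻¹ := by
        funext η; rw [sq]; ring
      rw [h3]
      exact h2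
    rw [h1.fderiv]
    ext v
    simp
    ring
  -- second derivative in coordinates
  have haij : ∀ i j, aCoeff F i j ξ
      = fderiv ℝ (fderiv ℝ (fun η => F η ^ 2 / 2)) ξ
          (EuclideanSpace.single j 1) (EuclideanSpace.single i 1) := by
    intro i j
    show fderiv ℝ (fun x => fderiv ℝ (fun η => F η ^ 2 / 2) x (EuclideanSpace.single i 1)) ξ
        (EuclideanSpace.single j 1) = _
    rw [fderiv_clm_apply hgd (differentiableAt_const _)]
    simp
  have hsymm2 := hf2.isSymmSndFDerivAt (by simp)
  refine ⟨fun i j => ?_, fun i => ?_, ?_⟩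
  · rw [haij, haij]
    exact hsymm2 _ _
  · have h2 := congrArg
      (fun w => fderiv ℝ (fderiv ℝ (fun η => F η ^ 2 / 2)) ξ w (EuclideanSpace.single i 1)) hxsum
    simp only [_root_.map_sum, _root_.map_smul, ContinuousLinearMap.sum_apply,
      ContinuousLinearMap.smul_apply, smul_eq_mul] at h2
    calc ∑ j, aCoeff F i j ξ * ξ j
        = ∑ j, ξ j * fderiv ℝ (fderiv ℝ (fun η => F η ^ 2 / 2)) ξ
            (EuclideanSpace.single j 1) (EuclideanSpace.single i 1) := by
          refine Finset.sum_congr rfl fun j _ => ?_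
          rw [haij]; ring
      _ = fderiv ℝ (fderiv ℝ (fun η => F η ^ 2 / 2)) ξ ξ (EuclideanSpace.single i 1) := h2
      _ = fderiv ℝ (fun η => F η ^ 2 / 2) ξ (EuclideanSpace.single i 1) := by rw [hHxi]
      _ = F ξ * pd F i ξ := by rw [hgradf]; simp [pd]
  · have h2 := congrArg (fun w => fderiv ℝ F ξ w) hxsum
    simp only [_root_.map_sum, _root_.map_smul, smul_eq_mul] at h2
    rw [← hEuler, ← h2]
    refine Finset.sum_congr rfl fun i _ => ?_
    simp only [pd, _root_.map_smul, smul_eq_mul]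
    ring

end Analysis

open Matrix

variable {n : ℕ}

lemma trace_sq_nonneg (M : Matrix (Fin n) (Fin n) ℝ) (hM : Mᵀ = M) :
    0 ≤ (M * M).trace := by
  have h : ∀ i j, M j i = M i j := fun i j => by
    conv_lhs => rw [← hM, Matrix.transpose_apply]
  have : (M * M).trace = ∑ i, ∑ j, (M i j) ^ 2 := by
    simp only [Matrix.trace, Matrix.diag, Matrix.mul_apply, sq]
    exact Finset.sum_congr rfl fun i _ => Finset.sum_congr rfl fun j _ => by rw [h i j]
  rw [this]
  positivity

lemma mul_vecMulVec' (A : Matrix (Fin n) (Fin n) ℝ) (x y : Fin n → ℝ) :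
    A * vecMulVec x y = vecMulVec (A *ᵥ x) y := by
  ext i j
  simp [Matrix.mul_apply, vecMulVec_apply, Matrix.mulVec, dotProduct, Finset.sum_mul, mul_assoc]

lemma vecMulVec_mul' (A : Matrix (Fin n) (Fin n) ℝ) (x y : Fin n → ℝ) :
    vecMulVec x y * A = vecMulVec x (y ᵥ* A) := by
  ext i j
  simp [Matrix.mul_apply, vecMulVec_apply, Matrix.vecMul, dotProduct, Finset.mul_sum, mul_assoc]

lemma trace_vecMulVec' (x y : Fin n → ℝ) : (vecMulVec x y).trace = x ⬝ᵥ y := by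
  simp [Matrix.trace, Matrix.diag, vecMulVec_apply, dotProduct]

lemma smul_vecMulVec_left (f : ℝ) (x y : Fin n → ℝ) :
    vecMulVec (f • x) y = f • vecMulVec x y := by
  ext i j; simp [vecMulVec_apply, mul_assoc]

lemma smul_vecMulVec_right (f : ℝ) (x y : Fin n → ℝ) :
    vecMulVec x (f • y) = f • vecMulVec x y := by
  ext i j; simp [vecMulVec_apply]; ring

lemma real_id (nr t c f s γ : ℝ) (hn : 1 < nr) (hf : f ≠ 0)
    (hs : s = (t - c) / (nr - 1)) (hγ : γ = (c - s) / f ^ 2) :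
    t ^ 2 / nr + (nr / (nr - 1)) * (t / nr - c) ^ 2
      = 2 * (γ * f * (f * c)) - (γ * f) ^ 2 * (f * f)
        + 2 * s * (t - γ * (f * f)) - s * s * nr := by
  subst hs hγ
  have h1 : nr - 1 ≠ 0 := by nlinarith
  have h0 : nr ≠ 0 := by nlinarith
  field_simp
  ring

open scoped MatrixOrder in
lemma key_matrix_ineq (hn : 2 ≤ n) (A U : Matrix (Fin n) (Fin n) ℝ)
    (hAs : Aᵀ = A) (hA : A.PosSemidef) (hU : Uᵀ = U) (x ℓ : Fin n → ℝ) (f : ℝ) (hf : 0 < f)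
    (hAx : A *ᵥ x = f • ℓ) (hlx : ℓ ⬝ᵥ x = f) :
    (A * U).trace ^ 2 / (n : ℝ)
      + ((n : ℝ) / ((n : ℝ) - 1)) *
        ((A * U).trace / (n : ℝ) - ℓ ⬝ᵥ (U *ᵥ ℓ)) ^ 2
      ≤ (A * U * (A * U)).trace := by
  have hn1 : (1 : ℝ) < (n : ℝ) := by exact_mod_cast lt_of_lt_of_le one_lt_two hn
  -- basic vector facts
  have hxA : x ᵥ* A = f • ℓ := by rw [← hAs, Matrix.vecMul_transpose, hAx]
  have hPA : vecMulVec x x * A = f • vecMulVec x ℓ := by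
    rw [vecMulVec_mul', hxA, smul_vecMulVec_right]
  have hAP : A * vecMulVec x x = f • vecMulVec ℓ x := by
    rw [mul_vecMulVec', hAx, smul_vecMulVec_left]
  have hlV : ℓ ᵥ* vecMulVec x ℓ = f • ℓ := by
    ext j
    simp only [Matrix.vecMul, dotProduct, vecMulVec_apply, Pi.smul_apply, smul_eq_mul]
    rw [← hlx, dotProduct, Finset.sum_mul]
    exact Finset.sum_congr rfl fun i _ => by ring
  have hVV : vecMulVec x ℓ * vecMulVec x ℓ = f • vecMulVec x ℓ := by
    rw [vecMulVec_mul', hlV, smul_vecMulVec_right]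
  have htrV : (vecMulVec x ℓ).trace = f := by
    rw [trace_vecMulVec', dotProduct_comm, hlx]
  have htrW : (vecMulVec ℓ x).trace = f := by
    rw [trace_vecMulVec', hlx]
  set t : ℝ := (A * U).trace with ht
  set c : ℝ := ℓ ⬝ᵥ (U *ᵥ ℓ) with hc
  have htrVUA : (vecMulVec x ℓ * (U * A)).trace = f * c := by
    rw [vecMulVec_mul', trace_vecMulVec', ← Matrix.vecMul_vecMul, dotProduct_comm,
      ← Matrix.dotProduct_mulVec, hAx, dotProduct_smul, ← Matrix.dotProduct_mulVec, ← hc,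
      smul_eq_mul]
  have htrUAV : ((U * A) * vecMulVec x ℓ).trace = f * c := by
    rw [Matrix.trace_mul_comm]; exact htrVUA
  set Q : ℝ := (A * U * (A * U)).trace with hQdef
  set s : ℝ := (t - c) / ((n : ℝ) - 1) with hs
  set γ : ℝ := (c - s) / f ^ 2 with hγ
  set S : Matrix (Fin n) (Fin n) ℝ := CFC.sqrt A with hSdef
  have hS2 : S * S = A := CFC.sqrt_mul_sqrt_self A hA.nonneg
  have hSt : Sᵀ = S := by
    have := (CFC.sqrt_nonneg A).posSemidef.isHermitian
    simpa [Matrix.IsHermitian] using this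
  set N : Matrix (Fin n) (Fin n) ℝ := U - γ • vecMulVec x x with hNdef
  have hPt : (vecMulVec x x)ᵀ = vecMulVec x x := by
    ext i j; simp [vecMulVec_apply, mul_comm]
  have hNt : Nᵀ = N := by
    rw [hNdef, Matrix.transpose_sub, Matrix.transpose_smul, hU, hPt]
  set X : Matrix (Fin n) (Fin n) ℝ := S * N * S with hXdef
  have hXt : Xᵀ = X := by
    rw [hXdef, Matrix.transpose_mul, Matrix.transpose_mul, hSt, hNt, Matrix.mul_assoc]
  set M : Matrix (Fin n) (Fin n) ℝ := X - s • (1 : Matrix (Fin n) (Fin n) ℝ) with hMdef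
  have hMt : Mᵀ = M := by
    rw [hMdef, Matrix.transpose_sub, Matrix.transpose_smul, Matrix.transpose_one, hXt]
  have h0 : 0 ≤ (M * M).trace := trace_sq_nonneg M hMt
  -- expansion of the trace
  have e1 : (M * M).trace = (X * X).trace - 2 * s * X.trace + s * s * (n : ℝ) := by
    rw [hMdef]
    simp only [sub_mul, mul_sub, Matrix.mul_smul, Matrix.smul_mul, Matrix.mul_one,
      Matrix.one_mul, smul_smul, Matrix.trace_sub, Matrix.trace_smul, Matrix.trace_one,
      Fintype.card_fin, smul_eq_mul]
    ring
  have e2 : (X * X).trace = ((N * A) * (N * A)).trace := by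
    have a1 : X * X = S * ((N * (S * S)) * (N * S)) := by rw [hXdef]; simp only [Matrix.mul_assoc]
    have a2 : (N * (S * S)) * (N * S) * S = (N * A) * (N * A) := by
      rw [← hS2]; simp only [Matrix.mul_assoc]
    rw [a1, Matrix.trace_mul_comm, a2]
  have e3 : X.trace = (A * N).trace := by
    rw [hXdef, Matrix.trace_mul_comm, ← Matrix.mul_assoc, hS2]
  have e4 : (A * N).trace = t - γ * (f * f) := by
    rw [hNdef, mul_sub, Matrix.mul_smul, hAP, Matrix.trace_sub, Matrix.trace_smul,
      Matrix.trace_smul, htrW, ← ht]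
    simp only [smul_eq_mul]
  have e5 : N * A = U * A - (γ * f) • vecMulVec x ℓ := by
    rw [hNdef, sub_mul, Matrix.smul_mul, hPA, smul_smul]
  have e6 : ((N * A) * (N * A)).trace
      = ((U * A) * (U * A)).trace - 2 * (γ * f) * (f * c) + (γ * f) ^ 2 * (f * f) := by
    rw [e5]
    simp only [sub_mul, mul_sub, Matrix.smul_mul, Matrix.mul_smul, smul_smul,
      Matrix.trace_sub, Matrix.trace_smul, smul_eq_mul]
    rw [htrVUA, htrUAV, hVV, Matrix.trace_smul, htrV, smul_eq_mul]
    ring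
  have e7 : ((U * A) * (U * A)).trace = Q := by
    have a1 : (U * A) * (U * A) = U * (A * U * A) := by simp only [Matrix.mul_assoc]
    have a2 : A * U * A * U = A * U * (A * U) := by simp only [Matrix.mul_assoc]
    rw [a1, Matrix.trace_mul_comm, hQdef, a2]
  have h0' : 0 ≤ Q - 2 * (γ * f) * (f * c) + (γ * f) ^ 2 * (f * f)
      - 2 * s * (t - γ * (f * f)) + s * s * (n : ℝ) := by
    rw [e1, e2, e6, e7, e3, e4] at h0
    linarith
  have hid := real_id (n : ℝ) t c f s γ hn1 (ne_of_gt hf) hs hγ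
  rw [hid]
  linarith

/-- Extended curvature–dimension inequality:
`Σ a_{ij} a_{kl} U_{ik} U_{jl} ≥ (Σ a_{ij}U_{ij})²/n + (n/(n−1)) ((Σ a_{ij}U_{ij})/n − Σ F_iF_jU_{ij})²`
for every symmetric matrix `U`. -/
theorem extended_curvature_dimension_inequality {n : ℕ} (hn : 2 ≤ n)
    (F : EuclideanSpace ℝ (Fin n) → ℝ) (hF : IsStronglyConvexMinkowskiNormC2 F)
    (ξ : EuclideanSpace ℝ (Fin n)) (hξ : ξ ≠ 0)
    (U : Matrix (Fin n) (Fin n) ℝ) (hU : U.IsSymm) :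
    (∑ i, ∑ j, aCoeff F i j ξ * U i j) ^ 2 / (n : ℝ)
      + ((n : ℝ) / ((n : ℝ) - 1)) *
        ((∑ i, ∑ j, aCoeff F i j ξ * U i j) / (n : ℝ)
          - ∑ i, ∑ j, (pd F i ξ) * (pd F j ξ) * U i j) ^ 2
      ≤ ∑ i, ∑ j, ∑ k, ∑ l, aCoeff F i j ξ * aCoeff F k l ξ * U i k * U j l := by
  obtain ⟨hsymm, hrow, heuler⟩ := analysis_facts F hF ξ hξ
  have hFpos : 0 < F ξ := hF.pos ξ hξ
  set A : Matrix (Fin n) (Fin n) ℝ := Matrix.of fun i j => aCoeff F i j ξ with hAdef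
  have hAapp : ∀ i j, A i j = aCoeff F i j ξ := fun i j => rfl
  have hAs : Aᵀ = A := by ext i j; exact hsymm j i
  have hUt : Uᵀ = U := hU
  have hUapp : ∀ i j, U j i = U i j := fun i j => by
    conv_lhs => rw [← hUt, Matrix.transpose_apply]
  have hPSD : A.PosSemidef := by
    refine Matrix.PosDef.posSemidef (Matrix.PosDef.of_dotProduct_mulVec_pos ?_ ?_)
    · ext i j
      simp only [Matrix.conjTranspose_apply, star_trivial]
      exact hsymm j i
    · intro v hv
      have h := hF.posDef ξ hξ (WithLp.toLp 2 v)
        (fun h0 => hv (by simpa using congrArg WithLp.ofLp h0))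
      have hexp : star v ⬝ᵥ (A *ᵥ v) = ∑ i, ∑ j, aCoeff F i j ξ * v i * v j := by
        simp only [star_trivial, dotProduct, Matrix.mulVec, Finset.mul_sum]
        refine Finset.sum_congr rfl fun i _ => Finset.sum_congr rfl fun j _ => ?_
        rw [hAapp i j]
        ring
      rw [hexp]
      exact h
  have hAx : A *ᵥ (fun i => ξ i) = F ξ • (fun i => pd F i ξ) := by
    funext i
    simp only [Matrix.mulVec, dotProduct, Pi.smul_apply, smul_eq_mul]
    simp only [hAapp]
    exact hrow i
  have hlx : (fun i => pd F i ξ) ⬝ᵥ (fun i => ξ i) = F ξ := by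
    simp only [dotProduct]
    exact heuler
  have key := key_matrix_ineq hn A U hAs hPSD hUt (fun i => ξ i) (fun i => pd F i ξ)
    (F ξ) hFpos hAx hlx
  have hT : (A * U).trace = ∑ i, ∑ j, aCoeff F i j ξ * U i j := by
    simp only [Matrix.trace, Matrix.diag, Matrix.mul_apply, Matrix.of_apply]
    refine Finset.sum_congr rfl fun i _ => Finset.sum_congr rfl fun j _ => ?_
    rw [hAapp i j, hUapp i j]
  have hC : (fun i => pd F i ξ) ⬝ᵥ (U *ᵥ fun i => pd F i ξ)
      = ∑ i, ∑ j, (pd F i ξ) * (pd F j ξ) * U i j := by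
    simp only [dotProduct, Matrix.mulVec, Finset.mul_sum]
    refine Finset.sum_congr rfl fun i _ => Finset.sum_congr rfl fun j _ => ?_
    ring
  have hQ : (A * U * (A * U)).trace
      = ∑ i, ∑ j, ∑ k, ∑ l, aCoeff F i j ξ * aCoeff F k l ξ * U i k * U j l := by
    have e0 : (A * U * (A * U)).trace
        = ∑ i, ∑ j, ∑ k, ∑ l, (A i k * U k j) * (A j l * U l i) := by
      simp only [Matrix.trace, Matrix.diag, Matrix.mul_apply, Finset.sum_mul_sum]
    rw [e0]
    refine Finset.sum_congr rfl fun i _ => ?_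
    rw [Finset.sum_comm]
    refine Finset.sum_congr rfl fun k _ => ?_
    rw [Finset.sum_comm]
    refine Finset.sum_congr rfl fun l _ => Finset.sum_congr rfl fun j _ => ?_
    simp only [hAapp]
    rw [hsymm j l, hUapp i l]
    ring
  rw [hT, hC, hQ] at key
  exact key
end
end
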